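/- (Barenblatt's lemma, part 2.) Let Q be a quantity space over the scalar system ℝ>0, and let d, d₁, …, d_m, b₁, …, b_r ∈ Q be such that b₁, …, b_r are independent (λ • ∏ⱼ bⱼ^{kⱼ} = 1_Q with λ ∈ ℝ>0 and integers kⱼ implies all kⱼ = 0) and d ~ 1_Q and dᵢ ~ 1_Q for all i. Let Ψ be a quantity function assigning to each tuple (p₁, …, p_m, q₁, …, q_r) with pᵢ ~ dᵢ and qⱼ ~ bⱼ a quantity Ψ(p, q) ~ d, and suppose Ψ has a covariant scalar representation. Then Ψ does not depend on its last r arguments: for all admissible p and all admissible q, q' one has Ψ(p₁, …, p_m, q₁, …, q_r) = Ψ(p₁, …, p_m, q₁', …, q_r'); equivalently, there is a function Φ with Ψ(p, q) = Φ(p₁, …, p_m) for all admissible inputs. -/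

import Mathlib

/-- A *scalable (commutative) monoid* over a scalar system `K ⊆ F`:
`K` is a subset of the field `F` closed under addition, containing `1`,
closed under multiplication and under inverses of nonzero elements
(so the nonzero elements of `K` form a group under multiplication),
together with a scalar multiplication `smul` satisfying the axioms
`1 • q = q`, `α • (β • q) = (α β) • q` and `α • (q * q') = (α • q) * q'`
for scalars in `K`. -/
structure ScalableMonoid (F : Type*) [Field F] (Q : Type*) [CommMonoid Q] where
  K : Set F
  one_mem : (1 : F) ∈ K
  add_mem : ∀ {a b : F}, a ∈ K → b ∈ K → a + b ∈ K
  mul_mem : ∀ {a b : F}, a ∈ K → b ∈ K → a * b ∈ K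
  inv_mem : ∀ {a : F}, a ∈ K → a ≠ 0 → a⁻¹ ∈ K
  smul : F → Q → Q
  smul_one : ∀ q : Q, smul 1 q = q
  smul_smul : ∀ {a b : F}, a ∈ K → b ∈ K → ∀ q : Q, smul a (smul b q) = smul (a * b) q
  smul_mul : ∀ {a : F}, a ∈ K → ∀ q q' : Q, smul a (q * q') = smul a q * q'

/-- `b : Fin n → Qˣ` (a list of invertible quantities) is a basis for the scalable
monoid `M` if every quantity has a unique expansion `q = μ • ∏ i, b i ^ k i`
with `μ ∈ K` and integer exponents `k`. -/
def ScalableMonoid.IsBasis {F : Type*} [Field F] {Q : Type*} [CommMonoid Q]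
    (M : ScalableMonoid F Q) {n : ℕ} (b : Fin n → Qˣ) : Prop :=
  ∀ q : Q, ∃! p : M.K × (Fin n → ℤ),
    q = M.smul (p.1 : F) (↑(∏ i, b i ^ p.2 i) : Q)

/-- A quantity space is a scalable monoid having a (finite) basis. -/
def ScalableMonoid.IsQuantitySpace {F : Type*} [Field F] {Q : Type*} [CommMonoid Q]
    (M : ScalableMonoid F Q) : Prop :=
  ∃ (n : ℕ) (b : Fin n → Qˣ), M.IsBasis b

/-- The measure `μ_B(q)`: the unique scalar in the expansion of `q` relative to
the basis `B`. -/
noncomputable def ScalableMonoid.measure {F : Type*} [Field F] {Q : Type*} [CommMonoid Q]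
    (M : ScalableMonoid F Q) {n : ℕ} {b : Fin n → Qˣ} (hB : M.IsBasis b) (q : Q) : F :=
  ((hB q).choose.1 : F)

/-- Quantities `q, q'` are equidimensional (`q ~ q'`) if `α • q = β • q'`
for some scalars `α, β ∈ K`. -/
def ScalableMonoid.Equidim {F : Type*} [Field F] {Q : Type*} [CommMonoid Q]
    (M : ScalableMonoid F Q) (q q' : Q) : Prop :=
  ∃ α β : F, α ∈ M.K ∧ β ∈ M.K ∧ M.smul α q = M.smul β q'


namespace BarAux

variable {Q : Type*} [CommMonoid Q]

lemma memK {M : ScalableMonoid ℝ Q} (hK : M.K = {x : ℝ | 0 < x}) {a : ℝ} (ha : 0 < a) :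
    a ∈ M.K := by rw [hK]; exact ha

lemma posK {M : ScalableMonoid ℝ Q} (hK : M.K = {x : ℝ | 0 < x}) {a : ℝ} (ha : a ∈ M.K) :
    0 < a := by rw [hK] at ha; exact ha

lemma smul_mul_smul' (M : ScalableMonoid ℝ Q) {a b : ℝ} (ha : a ∈ M.K) (hb : b ∈ M.K)
    (q q' : Q) : M.smul a q * M.smul b q' = M.smul (a * b) (q * q') := by
  rw [mul_comm (M.smul a q), ← M.smul_mul hb, mul_comm q', ← M.smul_mul ha,
    M.smul_smul hb ha, mul_comm b a]

/-- scalar multiplication of a unit by a positive real, as a unit. -/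
noncomputable def usmul (M : ScalableMonoid ℝ Q) (hK : M.K = {x : ℝ | 0 < x}) {a : ℝ} (ha : 0 < a)
    (u : Qˣ) : Qˣ where
  val := M.smul a ↑u
  inv := M.smul a⁻¹ ↑u⁻¹
  val_inv := by
    rw [smul_mul_smul' M (memK hK ha) (memK hK (by positivity)), mul_inv_cancel₀ ha.ne',
      Units.mul_inv, M.smul_one]
  inv_val := by
    rw [smul_mul_smul' M (memK hK (by positivity)) (memK hK ha), inv_mul_cancel₀ ha.ne',
      Units.inv_mul, M.smul_one]

@[simp] lemma coe_usmul (M : ScalableMonoid ℝ Q) (hK) {a : ℝ} (ha : 0 < a) (u : Qˣ) :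
    ((usmul M hK ha u : Qˣ) : Q) = M.smul a ↑u := rfl

lemma usmul_mul (M : ScalableMonoid ℝ Q) (hK) {a b : ℝ} (ha : 0 < a) (hb : 0 < b)
    (u v : Qˣ) : usmul M hK ha u * usmul M hK hb v = usmul M hK (mul_pos ha hb) (u * v) :=
  Units.ext <| by
    rw [Units.val_mul, coe_usmul, coe_usmul, coe_usmul, Units.val_mul,
      smul_mul_smul' M (memK hK ha) (memK hK hb)]

lemma usmul_inv (M : ScalableMonoid ℝ Q) (hK) {a : ℝ} (ha : 0 < a) (u : Qˣ) :
    (usmul M hK ha u)⁻¹ = usmul M hK (inv_pos.2 ha) u⁻¹ := Units.ext rfl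

lemma usmul_npow (M : ScalableMonoid ℝ Q) (hK) {a : ℝ} (ha : 0 < a) (u : Qˣ) (k : ℕ) :
    usmul M hK ha u ^ k = usmul M hK (pow_pos ha k) (u ^ k) := by
  induction k with
  | zero => exact Units.ext (by simp [M.smul_one])
  | succ n ih =>
      rw [pow_succ, ih, usmul_mul]
      exact Units.ext (by rw [coe_usmul, coe_usmul, pow_succ a n, pow_succ u n])

lemma usmul_zpow (M : ScalableMonoid ℝ Q) (hK) {a : ℝ} (ha : 0 < a) (u : Qˣ) (k : ℤ) :
    usmul M hK ha u ^ k = usmul M hK (zpow_pos ha k) (u ^ k) := by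
  cases k with
  | ofNat n =>
      rw [Int.ofNat_eq_coe, zpow_natCast, usmul_npow]
      exact Units.ext (by rw [coe_usmul, coe_usmul, zpow_natCast a n, zpow_natCast u n])
  | negSucc n =>
      rw [zpow_negSucc, usmul_npow, usmul_inv]
      exact Units.ext (by
        rw [coe_usmul, coe_usmul, zpow_negSucc a n, zpow_negSucc u n])

lemma coe_prod_usmul (M : ScalableMonoid ℝ Q) (hK) {ι : Type*} (s : Finset ι)
    (γ : ι → ℝ) (hγ : ∀ i, 0 < γ i) (u : ι → Qˣ) (k : ι → ℤ) :
    ((∏ i ∈ s, usmul M hK (hγ i) (u i) ^ k i : Qˣ) : Q) =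
      M.smul (∏ i ∈ s, γ i ^ k i) ↑(∏ i ∈ s, u i ^ k i) := by
  classical
  induction s using Finset.induction_on with
  | empty => simp [M.smul_one]
  | insert _ _ hx ih =>
      rename_i x s'
      rw [Finset.prod_insert hx, Finset.prod_insert hx, Finset.prod_insert hx,
        Units.val_mul, ih, usmul_zpow, coe_usmul, Units.val_mul,
        smul_mul_smul' M (memK hK (zpow_pos (hγ x) _))
          (memK hK (Finset.prod_pos fun i _ => zpow_pos (hγ i) _))]

section Basis
variable {M : ScalableMonoid ℝ Q} {n : ℕ} {e : Fin n → Qˣ}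

noncomputable def expnt (hB : M.IsBasis e) (q : Q) : Fin n → ℤ := (hB q).choose.2

lemma measure_mem (hB : M.IsBasis e) (q : Q) : M.measure hB q ∈ M.K := (hB q).choose.1.2

lemma expansion (hB : M.IsBasis e) (q : Q) :
    q = M.smul (M.measure hB q) ↑(∏ i, e i ^ expnt hB q i) := (hB q).choose_spec.1

lemma unique_exp (hB : M.IsBasis e) {q : Q} {a : ℝ} (ha : a ∈ M.K) {k : Fin n → ℤ}
    (h : q = M.smul a ↑(∏ i, e i ^ k i)) :
    a = M.measure hB q ∧ k = expnt hB q := by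
  have h2 := (hB q).choose_spec.2 (⟨⟨a, ha⟩, k⟩ : M.K × (Fin n → ℤ)) h
  exact ⟨congrArg (fun p => (p.1 : ℝ)) h2, congrArg Prod.snd h2⟩

lemma expnt_one (hB : M.IsBasis e) : expnt hB (1 : Q) = 0 :=
  (unique_exp hB M.one_mem (k := 0) (by simp [M.smul_one])).2.symm

lemma equidim_refl (q : Q) : M.Equidim q q := ⟨1, 1, M.one_mem, M.one_mem, rfl⟩

lemma equidim_symm {q q' : Q} (h : M.Equidim q q') : M.Equidim q' q := by
  obtain ⟨α, β, hα, hβ, h1⟩ := h; exact ⟨β, α, hβ, hα, h1.symm⟩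

lemma equidim_trans {x y z : Q} (hxy : M.Equidim x y) (hyz : M.Equidim y z) :
    M.Equidim x z := by
  obtain ⟨α, β, hα, hβ, h1⟩ := hxy
  obtain ⟨α', β', hα', hβ', h2⟩ := hyz
  refine ⟨α' * α, β * β', M.mul_mem hα' hα, M.mul_mem hβ hβ', ?_⟩
  rw [← M.smul_smul hα' hα, h1, M.smul_smul hα' hβ, mul_comm α' β,
    ← M.smul_smul hβ hα', h2, M.smul_smul hβ hβ']

lemma expnt_eq_of_equidim (hB : M.IsBasis e) {q q' : Q} (h : M.Equidim q q') :
    expnt hB q = expnt hB q' := by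
  obtain ⟨α, β, hα, hβ, heq⟩ := h
  have e1 : M.smul α q = M.smul (α * M.measure hB q) ↑(∏ i, e i ^ expnt hB q i) := by
    conv_lhs => rw [expansion hB q, M.smul_smul hα (measure_mem hB q)]
  have e2 : M.smul α q = M.smul (β * M.measure hB q') ↑(∏ i, e i ^ expnt hB q' i) := by
    rw [heq]
    conv_lhs => rw [expansion hB q', M.smul_smul hβ (measure_mem hB q')]
  exact (unique_exp hB (M.mul_mem hα (measure_mem hB q)) e1).2.trans
    (unique_exp hB (M.mul_mem hβ (measure_mem hB q')) e2).2.symm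

lemma eq_of_equidim_of_measure_eq (hB : M.IsBasis e) {q q' : Q} (h : M.Equidim q q')
    (hm : M.measure hB q = M.measure hB q') : q = q' := by
  conv_lhs => rw [expansion hB q]
  conv_rhs => rw [expansion hB q']
  rw [hm, expnt_eq_of_equidim hB h]

lemma rescale_expansion (hK : M.K = {x : ℝ | 0 < x}) (hB : M.IsBasis e)
    (γ : Fin n → ℝ) (hγ : ∀ i, 0 < γ i) (q : Q) :
    q = M.smul (M.measure hB q * (∏ i, γ i ^ expnt hB q i)⁻¹)
      ↑(∏ i, usmul M hK (hγ i) (e i) ^ expnt hB q i) := by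
  have hp : 0 < ∏ i, γ i ^ expnt hB q i := Finset.prod_pos fun i _ => zpow_pos (hγ i) _
  rw [coe_prod_usmul, M.smul_smul (M.mul_mem (measure_mem hB q) (memK hK (by positivity)))
    (memK hK hp), mul_assoc, inv_mul_cancel₀ hp.ne', mul_one]
  exact expansion hB q

lemma isBasis_rescale (hK : M.K = {x : ℝ | 0 < x}) (hB : M.IsBasis e)
    (γ : Fin n → ℝ) (hγ : ∀ i, 0 < γ i) :
    M.IsBasis (fun i => usmul M hK (hγ i) (e i)) := by
  intro q
  have hp : 0 < ∏ i, γ i ^ expnt hB q i := Finset.prod_pos fun i _ => zpow_pos (hγ i) _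
  refine ⟨⟨⟨M.measure hB q * (∏ i, γ i ^ expnt hB q i)⁻¹,
    M.mul_mem (measure_mem hB q) (memK hK (by positivity))⟩, expnt hB q⟩,
    rescale_expansion hK hB γ hγ q, ?_⟩
  rintro ⟨⟨ν, hν⟩, k'⟩ h'
  have hp' : 0 < ∏ i, γ i ^ k' i := Finset.prod_pos fun i _ => zpow_pos (hγ i) _
  have h'' : q = M.smul (ν * ∏ i, γ i ^ k' i) ↑(∏ i, e i ^ k' i) := by
    rw [← M.smul_smul hν (memK hK hp'), ← coe_prod_usmul M hK Finset.univ γ hγ e k']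
    exact h'
  obtain ⟨hm, hk⟩ := unique_exp hB (M.mul_mem hν (memK hK hp')) h''
  subst hk
  refine Prod.ext (Subtype.ext ?_) rfl
  show ν = M.measure hB q * (∏ i, γ i ^ expnt hB q i)⁻¹
  field_simp
  exact hm

lemma measure_rescale (hK : M.K = {x : ℝ | 0 < x}) (hB : M.IsBasis e)
    (γ : Fin n → ℝ) (hγ : ∀ i, 0 < γ i)
    (hB' : M.IsBasis (fun i => usmul M hK (hγ i) (e i))) (q : Q) :
    M.measure hB' q = M.measure hB q * (∏ i, γ i ^ expnt hB q i)⁻¹ := by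
  have hp : 0 < ∏ i, γ i ^ expnt hB q i := Finset.prod_pos fun i _ => zpow_pos (hγ i) _
  exact (unique_exp hB' (M.mul_mem (measure_mem hB q) (memK hK (by positivity)))
    (rescale_expansion hK hB γ hγ q)).1.symm

end Basis
section Matrix
open scoped Matrix

lemma zpow_sum' {G : Type*} [CommGroup G] (x : G) {ι : Type*} (s : Finset ι) (f : ι → ℤ) :
    x ^ (∑ j ∈ s, f j) = ∏ j ∈ s, x ^ f j := by
  classical
  induction s using Finset.induction_on with
  | empty => simp
  | insert _ _ hx ih =>
      rename_i a s'
      rw [Finset.sum_insert hx, Finset.prod_insert hx, zpow_add, ih]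

lemma surj_of_int_indep {r n : ℕ} (K : Fin r → Fin n → ℤ)
    (hind : ∀ v : Fin r → ℤ, (∀ i, ∑ j, v j * K j i = 0) → v = 0) (y : Fin r → ℝ) :
    ∃ x : Fin n → ℝ, ∀ j, ∑ i, (K j i : ℝ) * x i = y j := by
  classical
  set Az : Matrix (Fin r) (Fin n) ℤ := Matrix.of K with hAz
  have hdetGz : (Az * Az.transpose).det ≠ 0 := by
    intro h0
    obtain ⟨v, hv, hGv⟩ := (Matrix.exists_mulVec_eq_zero_iff).2 h0
    set w : Fin n → ℤ := Az.transpose.mulVec v with hw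
    have hvecmul : Matrix.vecMul v Az = w := by
      funext i
      simp [Matrix.vecMul, Matrix.mulVec, dotProduct, hw, hAz, mul_comm]
    have hww : ∑ i, w i * w i = 0 := by
      have : w ⬝ᵥ w = 0 := by
        calc w ⬝ᵥ w = Matrix.vecMul v Az ⬝ᵥ w := by rw [hvecmul]
        _ = v ⬝ᵥ Az.mulVec w := (Matrix.dotProduct_mulVec v Az w).symm
        _ = v ⬝ᵥ (Az * Az.transpose).mulVec v := by rw [hw, Matrix.mulVec_mulVec]
        _ = 0 := by rw [hGv, dotProduct_zero]
      simpa [dotProduct] using this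
    have hw0 : ∀ i, w i = 0 := by
      intro i
      have := (Finset.sum_eq_zero_iff_of_nonneg
        (fun i _ => mul_self_nonneg (w i))).1 hww i (Finset.mem_univ i)
      exact mul_self_eq_zero.1 this
    refine hv (hind v fun i => ?_)
    have := hw0 i
    simp only [hw, Matrix.mulVec, dotProduct, Matrix.transpose_apply, hAz,
      Matrix.of_apply] at this
    calc ∑ j, v j * K j i = ∑ j, K j i * v j := by
          exact Finset.sum_congr rfl fun j _ => mul_comm _ _
    _ = 0 := this
  set A : Matrix (Fin r) (Fin n) ℝ := Matrix.of fun j i => ((K j i : ℤ) : ℝ) with hA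
  have hGcast : A * A.transpose = (Az * Az.transpose).map (Int.cast : ℤ → ℝ) := by
    ext j j'
    simp [hA, hAz, Matrix.mul_apply, Matrix.map_apply]
  have hdetR : (A * A.transpose).det ≠ 0 := by
    rw [hGcast]
    have : (Az * Az.transpose).map (Int.cast : ℤ → ℝ) =
        (Int.castRingHom ℝ).mapMatrix (Az * Az.transpose) := rfl
    rw [this, ← RingHom.map_det]
    exact_mod_cast Int.cast_ne_zero.2 hdetGz
  have hunit : IsUnit (A * A.transpose).det := isUnit_iff_ne_zero.2 hdetR
  refine ⟨A.transpose.mulVec ((A * A.transpose)⁻¹.mulVec y), fun j => ?_⟩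
  have hy : A.mulVec (A.transpose.mulVec ((A * A.transpose)⁻¹.mulVec y)) = y := by
    rw [Matrix.mulVec_mulVec, Matrix.mulVec_mulVec,
      Matrix.mul_nonsing_inv _ hunit, Matrix.one_mulVec]
  have := congrFun hy j
  simpa [Matrix.mulVec, dotProduct, hA] using this

end Matrix
section ProdUnits
variable {Q : Type*} [CommMonoid Q] {M : ScalableMonoid ℝ Q} {n : ℕ} {e : Fin n → Qˣ}

lemma coe_prod_pow_units (hK : M.K = {x : ℝ | 0 < x}) (hB : M.IsBasis e) {r : ℕ}
    (b : Fin r → Qˣ) (v : Fin r → ℤ) :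
    ((∏ j, b j ^ v j : Qˣ) : Q) =
      M.smul (∏ j, M.measure hB (↑(b j) : Q) ^ v j)
        ↑(∏ i, e i ^ (∑ j, v j * expnt hB (↑(b j) : Q) i)) := by
  have hβ : ∀ j, 0 < M.measure hB (↑(b j) : Q) := fun j => posK hK (measure_mem hB _)
  have hbj : ∀ j, b j = usmul M hK (hβ j) (∏ i, e i ^ expnt hB (↑(b j) : Q) i) :=
    fun j => Units.ext (expansion hB ↑(b j))
  calc ((∏ j, b j ^ v j : Qˣ) : Q)
      = ↑(∏ j, usmul M hK (hβ j) (∏ i, e i ^ expnt hB (↑(b j) : Q) i) ^ v j) := by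
        congr 1
        exact Finset.prod_congr rfl fun j _ => by rw [← hbj j]
    _ = M.smul (∏ j, M.measure hB (↑(b j) : Q) ^ v j)
        ↑(∏ j, (∏ i, e i ^ expnt hB (↑(b j) : Q) i) ^ v j) := by
        rw [coe_prod_usmul]
    _ = _ := by
        congr 2
        calc ∏ j, (∏ i, e i ^ expnt hB (↑(b j) : Q) i) ^ v j
            = ∏ j, ∏ i, e i ^ (expnt hB (↑(b j) : Q) i * v j) := by
              refine Finset.prod_congr rfl fun j _ => ?_
              rw [← Finset.prod_zpow]
              exact Finset.prod_congr rfl fun i _ => (zpow_mul _ _ _).symm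
          _ = ∏ i, ∏ j, e i ^ (expnt hB (↑(b j) : Q) i * v j) := Finset.prod_comm
          _ = ∏ i, e i ^ (∑ j, v j * expnt hB (↑(b j) : Q) i) := by
              refine Finset.prod_congr rfl fun i _ => ?_
              rw [zpow_sum' (e i)]
              exact Finset.prod_congr rfl fun j _ => by rw [mul_comm]

lemma int_indep (hK : M.K = {x : ℝ | 0 < x}) (hB : M.IsBasis e) {r : ℕ} (b : Fin r → Qˣ)
    (hb : ∀ lam : ℝ, lam ∈ M.K → ∀ kv : Fin r → ℤ,
      M.smul lam (↑(∏ j, b j ^ kv j) : Q) = 1 → kv = 0) :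
    ∀ v : Fin r → ℤ, (∀ i, ∑ j, v j * expnt hB (↑(b j) : Q) i = 0) → v = 0 := by
  intro v hv
  have hc : 0 < ∏ j, M.measure hB (↑(b j) : Q) ^ v j :=
    Finset.prod_pos fun j _ => zpow_pos (posK hK (measure_mem hB _)) _
  apply hb (∏ j, M.measure hB (↑(b j) : Q) ^ v j)⁻¹ (memK hK (by positivity)) v
  rw [coe_prod_pow_units hK hB b v]
  have h1 : (∏ i, e i ^ (∑ j, v j * expnt hB (↑(b j) : Q) i) : Qˣ) = 1 := by
    rw [Finset.prod_congr rfl fun i _ => by rw [hv i, zpow_zero]]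
    exact Finset.prod_const_one
  rw [h1, Units.val_one, M.smul_smul (memK hK (by positivity)) (memK hK hc),
    inv_mul_cancel₀ hc.ne', M.smul_one]

end ProdUnits
end BarAux

/-- Barenblatt's lemma, part 2: in a quantity space over the
positive reals, let `b₁, …, b_r` be independent, and let `d ~ 1_Q` and
`dᵢ ~ 1_Q` for all `i`. If a quantity function `Ψ` taking admissible tuples
(`pᵢ ~ dᵢ`, `qⱼ ~ bⱼ`) to quantities `~ d` has a covariant scalar
representation, then `Ψ` does not depend on its last `r` arguments;
equivalently there is `Φ` with `Ψ(p, q) = Φ(p)` on admissible inputs. -/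
theorem barenblatt_lemma_part2 {Q : Type*} [CommMonoid Q]
    (M : ScalableMonoid ℝ Q) (hK : M.K = {x : ℝ | 0 < x})
    (hQS : M.IsQuantitySpace)
    {m r : ℕ} (d : Q) (dd : Fin m → Q) (b : Fin r → Qˣ)
    (hb : ∀ lam : ℝ, lam ∈ M.K → ∀ kv : Fin r → ℤ,
      M.smul lam (↑(∏ j, b j ^ kv j) : Q) = 1 → kv = 0)
    (hd : M.Equidim d 1) (hdd : ∀ i, M.Equidim (dd i) 1)
    (Ψ : (Fin m → Q) → (Fin r → Q) → Q)
    (hΨ : ∀ (p : Fin m → Q) (q : Fin r → Q),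
      (∀ i, M.Equidim (p i) (dd i)) → (∀ j, M.Equidim (q j) ↑(b j)) →
      M.Equidim (Ψ p q) d)
    (hcov : ∃ ψ : (Fin m → ℝ) → (Fin r → ℝ) → ℝ,
      ∀ {nB : ℕ} {bB : Fin nB → Qˣ} (hB : M.IsBasis bB)
        (p : Fin m → Q) (q : Fin r → Q),
        (∀ i, M.Equidim (p i) (dd i)) → (∀ j, M.Equidim (q j) ↑(b j)) →
        ψ (fun i => M.measure hB (p i)) (fun j => M.measure hB (q j)) =
          M.measure hB (Ψ p q)) :
    (∀ (p : Fin m → Q) (q q' : Fin r → Q),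
      (∀ i, M.Equidim (p i) (dd i)) →
      (∀ j, M.Equidim (q j) ↑(b j)) → (∀ j, M.Equidim (q' j) ↑(b j)) →
      Ψ p q = Ψ p q') ∧
    (∃ Φ : (Fin m → Q) → Q, ∀ (p : Fin m → Q) (q : Fin r → Q),
      (∀ i, M.Equidim (p i) (dd i)) → (∀ j, M.Equidim (q j) ↑(b j)) →
      Ψ p q = Φ p) := by
  classical
  obtain ⟨n, e, hB⟩ := hQS
  obtain ⟨ψ, hψ⟩ := hcov
  have key : ∀ (p : Fin m → Q) (q q' : Fin r → Q),
      (∀ i, M.Equidim (p i) (dd i)) →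
      (∀ j, M.Equidim (q j) ↑(b j)) → (∀ j, M.Equidim (q' j) ↑(b j)) →
      Ψ p q = Ψ p q' := by
    intro p q q' hp hq hq'
    have hpos : ∀ x : Q, 0 < M.measure hB x := fun x => BarAux.posK hK (BarAux.measure_mem hB x)
    set t : Fin r → ℝ := fun j => Real.log (M.measure hB (q j) / M.measure hB (q' j)) with ht
    obtain ⟨x, hx⟩ := BarAux.surj_of_int_indep (fun j => BarAux.expnt hB (↑(b j) : Q))
      (BarAux.int_indep hK hB b hb) t
    set γ : Fin n → ℝ := fun i => Real.exp (x i) with hγdef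
    have hγ : ∀ i, 0 < γ i := fun i => Real.exp_pos _
    have hB' := BarAux.isBasis_rescale hK hB γ hγ
    have hexpq : ∀ j, BarAux.expnt hB (q j) = BarAux.expnt hB (↑(b j) : Q) :=
      fun j => BarAux.expnt_eq_of_equidim hB (hq j)
    have hprod : ∀ j, ∏ i, γ i ^ BarAux.expnt hB (q j) i
        = M.measure hB (q j) / M.measure hB (q' j) := by
      intro j
      rw [hexpq j]
      have hstep : ∀ i, γ i ^ (BarAux.expnt hB (↑(b j) : Q) i)
          = Real.exp ((BarAux.expnt hB (↑(b j) : Q) i : ℝ) * x i) := by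
        intro i
        calc γ i ^ (BarAux.expnt hB (↑(b j) : Q) i)
            = Real.exp (x i) ^ ((BarAux.expnt hB (↑(b j) : Q) i : ℝ)) := by
              rw [Real.rpow_intCast]
          _ = Real.exp (x i * (BarAux.expnt hB (↑(b j) : Q) i : ℝ)) := by
              rw [Real.rpow_def_of_pos (Real.exp_pos _), Real.log_exp]
          _ = _ := by rw [mul_comm]
      rw [Finset.prod_congr rfl fun i _ => hstep i, ← Real.exp_sum, hx j,
        Real.exp_log (div_pos (hpos _) (hpos _))]
    have hmp : ∀ i, M.measure hB' (p i) = M.measure hB (p i) := by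
      intro i
      have h1 : M.Equidim (p i) 1 := BarAux.equidim_trans (hp i) (hdd i)
      rw [BarAux.measure_rescale hK hB γ hγ hB', BarAux.expnt_eq_of_equidim hB h1,
        BarAux.expnt_one hB]
      simp
    have hmq : ∀ j, M.measure hB' (q j) = M.measure hB (q' j) := by
      intro j
      rw [BarAux.measure_rescale hK hB γ hγ hB', hprod j, inv_div,
        mul_div_cancel₀ _ (hpos (q j)).ne']
    have hmPsi : M.measure hB' (Ψ p q) = M.measure hB (Ψ p q) := by
      have h1 : M.Equidim (Ψ p q) 1 := BarAux.equidim_trans (hΨ p q hp hq) hd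
      rw [BarAux.measure_rescale hK hB γ hγ hB', BarAux.expnt_eq_of_equidim hB h1,
        BarAux.expnt_one hB]
      simp
    have c1 := hψ hB' p q hp hq
    have c2 := hψ hB p q' hp hq'
    rw [hmPsi, funext hmp, funext hmq] at c1
    exact BarAux.eq_of_equidim_of_measure_eq hB
      (BarAux.equidim_trans (hΨ p q hp hq) (BarAux.equidim_symm (hΨ p q' hp hq')))
      (c1.symm.trans c2).symm.symm
  exact ⟨key, ⟨fun p => Ψ p (fun j => ↑(b j)), fun p q hp hq =>
    key p q (fun j => ↑(b j)) hp hq (fun j => BarAux.equidim_refl _)⟩⟩
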